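/- Let n = 3g−3 and let L be a linear system of quadratic forms on ℂⁿ with dim L = (g−1)(g−6)/2. If Y ⊆ ℂⁿ is a subspace contained in the common zero locus of all quadrics in L (in the strong sense that every quadric in L vanishes on the symmetric square of Y), then L embeds into the space of quadratic forms vanishing on Y, whence (g−1)(g−6)/2 ≤ n(n+1)/2 − (dim Y)(dim Y + 1)/2, and therefore dim Y ≤ (−1 + √(32g² − 32g + 1))/2. -/

import Mathlib

theorem base_locus_arith (g n m D : ℕ) (hg : 9 ≤ g) (hn : n = 3 * g - 3)
    (hL : (D : ℤ) = ((g : ℤ) - 1) * ((g : ℤ) - 6) / 2)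
    (key : 2 * D + m * (m + 1) ≤ n * (n + 1)) :
    ((g : ℤ) - 1) * ((g : ℤ) - 6) / 2 ≤
        (n : ℤ) * ((n : ℤ) + 1) / 2 - (m : ℤ) * ((m : ℤ) + 1) / 2 ∧
      (m : ℝ) ≤ (-1 + Real.sqrt (32 * (g : ℝ) ^ 2 - 32 * (g : ℝ) + 1)) / 2 := by
  have heven : Even (((g : ℤ) - 1) * ((g : ℤ) - 6)) := by
    rcases Int.even_or_odd (g : ℤ) with ⟨k, hk⟩ | ⟨k, hk⟩
    · exact Int.even_mul.mpr (Or.inr ⟨k - 3, by omega⟩)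
    · exact Int.even_mul.mpr (Or.inl ⟨k, by omega⟩)
  obtain ⟨r, hr⟩ := heven
  obtain ⟨s, hs⟩ := (Int.even_mul_succ_self (n : ℤ))
  obtain ⟨t, ht⟩ := (Int.even_mul_succ_self (m : ℤ))
  have hDr : (D : ℤ) = r := by rw [hr] at hL; omega
  have keyZ : 2 * (D : ℤ) + (t + t) ≤ s + s := by
    have h0 : 2 * (D : ℤ) + (m : ℤ) * ((m : ℤ) + 1) ≤ (n : ℤ) * ((n : ℤ) + 1) := by
      exact_mod_cast key
    rw [ht, hs] at h0
    linarith
  constructor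
  · rw [hr, hs, ht]
    omega
  · have hnZ : (n : ℤ) = 3 * (g : ℤ) - 3 := by omega
    have h1 : (m : ℤ) * ((m : ℤ) + 1) ≤ (n : ℤ) * ((n : ℤ) + 1)
        - ((g : ℤ) - 1) * ((g : ℤ) - 6) := by
      rw [hr, hs, ht]; omega
    have h2 : (m : ℤ) * ((m : ℤ) + 1) ≤ 8 * (g : ℤ) ^ 2 - 8 * (g : ℤ) := by
      rw [hnZ] at h1
      nlinarith [h1]
    have hm2R : (m : ℝ) * ((m : ℝ) + 1) ≤ 8 * (g : ℝ) ^ 2 - 8 * (g : ℝ) := by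
      exact_mod_cast h2
    have hgR : (9 : ℝ) ≤ (g : ℝ) := by exact_mod_cast hg
    have hsq : (2 * (m : ℝ) + 1) ^ 2 ≤ 32 * (g : ℝ) ^ 2 - 32 * (g : ℝ) + 1 := by
      nlinarith
    have hle : 2 * (m : ℝ) + 1 ≤ Real.sqrt (32 * (g : ℝ) ^ 2 - 32 * (g : ℝ) + 1) := by
      rw [← Real.sqrt_sq (by positivity : (0 : ℝ) ≤ 2 * (m : ℝ) + 1)]
      exact Real.sqrt_le_sqrt hsq
    linarith

/-- If `L` is a linear system of quadratic forms on `ℂⁿ` (`n = 3g-3`) of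
dimension `(g-1)(g-6)/2` and `Y` is a subspace on which every quadric of `L`
vanishes (together with its polar form), then
`(g-1)(g-6)/2 ≤ n(n+1)/2 - m(m+1)/2` where `m = dim Y`, and
`m ≤ (-1 + √(32g²-32g+1))/2`. -/
theorem base_locus_dim_bound
    (g : ℕ) (hg : 9 ≤ g) (n : ℕ) (hn : n = 3 * g - 3)
    (L : Submodule ℂ (QuadraticForm ℂ (Fin n → ℂ)))
    (hL : (Module.finrank ℂ L : ℤ) = (g - 1) * (g - 6) / 2)
    (Y : Submodule ℂ (Fin n → ℂ))
    (hvan : ∀ q ∈ L, (∀ v ∈ Y, q v = 0) ∧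
      (∀ v ∈ Y, ∀ w ∈ Y, QuadraticMap.polar q v w = 0)) :
    ((g : ℤ) - 1) * (g - 6) / 2 ≤
        (n : ℤ) * (n + 1) / 2 -
          (Module.finrank ℂ Y : ℤ) * (Module.finrank ℂ Y + 1) / 2 ∧
      (Module.finrank ℂ Y : ℝ) ≤
        (-1 + Real.sqrt (32 * (g : ℝ) ^ 2 - 32 * g + 1)) / 2 := by
  classical
  set m := Module.finrank ℂ Y with hm
  have hmn : m ≤ n := by
    have h := Submodule.finrank_le Y
    simpa [Module.finrank_fintype_fun_eq_card] using h
  -- complement and adapted basis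
  obtain ⟨Y', hc⟩ := Submodule.exists_isCompl Y
  set m' := Module.finrank ℂ Y' with hm'
  have hmm' : m + m' = n := by
    have h := Submodule.finrank_add_eq_of_isCompl hc
    simpa [Module.finrank_fintype_fun_eq_card] using h
  let bY : Module.Basis (Fin m) ℂ Y := Module.finBasis ℂ Y
  let bY' : Module.Basis (Fin m') ℂ Y' := Module.finBasis ℂ Y'
  let e : (Fin m ⊕ Fin m') ≃ Fin n := finSumFinEquiv.trans (finCongr hmm')
  let b : Module.Basis (Fin n) ℂ (Fin n → ℂ) :=
    ((bY.prod bY').map (Submodule.prodEquivOfIsCompl Y Y' hc)).reindex e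
  have hbY : ∀ i : Fin n, (i : ℕ) < m → b i ∈ Y := by
    intro i hi
    have hie : i = e (Sum.inl ⟨(i : ℕ), hi⟩) := by
      apply Fin.ext
      simp [e]
    rw [hie]
    show ((bY.prod bY').map (Submodule.prodEquivOfIsCompl Y Y' hc)).reindex e
      (e (Sum.inl ⟨(i : ℕ), hi⟩)) ∈ Y
    rw [Module.Basis.reindex_apply, Equiv.symm_apply_apply, Module.Basis.map_apply]
    have h2 : (bY.prod bY') (Sum.inl ⟨(i : ℕ), hi⟩) = (bY ⟨(i : ℕ), hi⟩, 0) := by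
      apply Prod.ext <;> simp
    rw [h2, Submodule.coe_prodEquivOfIsCompl']
    simp
  -- the index type
  let σ := {p : Fin n × Fin n // p.1 ≤ p.2 ∧ m ≤ (p.2 : ℕ)}
  -- the injection
  let Φ : L →ₗ[ℂ] (σ → ℂ) :=
    { toFun := fun q p =>
        QuadraticMap.polar (q : QuadraticForm ℂ (Fin n → ℂ)) (b p.1.1) (b p.1.2)
      map_add' := by
        intro q r
        funext p
        simp [QuadraticMap.polar]
        ring
      map_smul' := by
        intro c q
        funext p
        have hcoe : ((c • q : L) : QuadraticForm ℂ (Fin n → ℂ))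
            = c • (q : QuadraticForm ℂ (Fin n → ℂ)) := rfl
        rw [hcoe]
        simp only [QuadraticMap.polar, QuadraticMap.smul_apply, smul_eq_mul,
          RingHom.id_apply, Pi.smul_apply]
        ring }
  have hΦker : LinearMap.ker Φ = ⊥ := by
    refine LinearMap.ker_eq_bot'.mpr ?_
    intro q hq
    have key : ∀ i j : Fin n, i ≤ j →
        QuadraticMap.polar (q : QuadraticForm ℂ (Fin n → ℂ)) (b i) (b j) = 0 := by
      intro i j hij
      by_cases hjm : m ≤ (j : ℕ)
      · exact congrFun hq ⟨(i, j), hij, hjm⟩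
      · have hj : (j : ℕ) < m := Nat.lt_of_not_le hjm
        have hi : (i : ℕ) < m := lt_of_le_of_lt (Fin.le_def.mp hij) hj
        exact (hvan q q.2).2 (b i) (hbY i hi) (b j) (hbY j hj)
    have hpolar : ∀ i j : Fin n,
        QuadraticMap.polar (q : QuadraticForm ℂ (Fin n → ℂ)) (b i) (b j) = 0 := by
      intro i j
      rcases le_total i j with hij | hij
      · exact key i j hij
      · rw [QuadraticMap.polar_comm]
        exact key j i hij
    have hB : QuadraticMap.polarBilin (q : QuadraticForm ℂ (Fin n → ℂ)) = 0 :=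
      LinearMap.ext_basis b b fun i j => by
        simp [QuadraticMap.polarBilin_apply_apply, hpolar i j]
    have hq0 : (q : QuadraticForm ℂ (Fin n → ℂ)) = 0 := by
      ext x
      have h1 : QuadraticMap.polar (q : QuadraticForm ℂ (Fin n → ℂ)) x x = 0 := by
        have := LinearMap.congr_fun (LinearMap.congr_fun hB x) x
        simpa using this
      have h2 := QuadraticMap.polar_self (q : QuadraticForm ℂ (Fin n → ℂ)) x
      rw [h1] at h2
      have : (q : QuadraticForm ℂ (Fin n → ℂ)) x + (q : QuadraticForm ℂ (Fin n → ℂ)) x = 0 := by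
        have := h2.symm
        rwa [two_smul] at this
      simpa using add_self_eq_zero.mp this
    exact Subtype.ext hq0
  have hD : Module.finrank ℂ L ≤ Fintype.card σ := by
    haveI : Module.Finite ℂ (σ → ℂ) := inferInstance
    have hinj : Function.Injective Φ := by
      intro x y hxy
      have hk : Φ (x - y) = 0 := by
        have h := Φ.map_sub x y
        rw [hxy, sub_self] at h
        exact h
      have h0 := (LinearMap.ker_eq_bot'.mp hΦker) (x - y) hk
      exact sub_eq_zero.mp h0
    have h : Module.finrank ℂ L ≤ Module.finrank ℂ (σ → ℂ) :=
      LinearMap.finrank_le_finrank_of_injective (f := Φ) hinj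
    simpa [Module.finrank_fintype_fun_eq_card] using h
  -- cardinality of σ
  let e1 : σ ≃ Σ j : Fin n, {i : Fin n // i ≤ j ∧ m ≤ (j : ℕ)} :=
    { toFun := fun p => ⟨p.1.2, p.1.1, p.2⟩
      invFun := fun x => ⟨(x.2.1, x.1), x.2.2⟩
      left_inv := fun p => rfl
      right_inv := fun x => rfl }
  have hσcard : Fintype.card σ = ∑ j : Fin n, (if m ≤ (j : ℕ) then (j : ℕ) + 1 else 0) := by
    rw [Fintype.card_congr e1, Fintype.card_sigma]
    refine Finset.sum_congr rfl fun j _ => ?_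
    by_cases hmj : m ≤ (j : ℕ)
    · rw [if_pos hmj]
      have e2 : {i : Fin n // i ≤ j ∧ m ≤ (j : ℕ)} ≃ Fin ((j : ℕ) + 1) :=
        { toFun := fun i => ⟨(i : Fin n), Nat.lt_succ_of_le (Fin.le_def.mp i.2.1)⟩
          invFun := fun k => ⟨⟨(k : ℕ), lt_of_lt_of_le k.isLt (Nat.succ_le_of_lt j.isLt)⟩,
            Fin.le_def.mpr (Nat.lt_succ_iff.mp k.isLt), hmj⟩
          left_inv := fun i => by ext; rfl
          right_inv := fun k => rfl }
      rw [Fintype.card_congr e2, Fintype.card_fin]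
    · rw [if_neg hmj]
      exact Fintype.card_eq_zero_iff.mpr ⟨fun x => hmj x.2.2⟩
  -- Gauss sum
  have gauss : ∀ k : ℕ, 2 * (∑ j ∈ Finset.range k, (j + 1)) = k * (k + 1) := by
    intro k
    induction k with
    | zero => simp
    | succ k ih => rw [Finset.sum_range_succ, Nat.mul_add, ih]; ring
  have hsplit : (∑ j ∈ Finset.range n, (if m ≤ j then j + 1 else 0))
      + (∑ j ∈ Finset.range m, (j + 1)) = ∑ j ∈ Finset.range n, (j + 1) := by
    have h1 : (∑ j ∈ Finset.range m, (j + 1))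
        = ∑ j ∈ Finset.range n, (if m ≤ j then 0 else j + 1) := by
      rw [← Finset.sum_subset (Finset.range_subset_range.mpr hmn)
        (fun x _ hx => if_pos (Nat.not_lt.mp (fun h => hx (Finset.mem_range.mpr h))))]
      exact Finset.sum_congr rfl fun j hj =>
        (if_neg (Nat.not_le.mpr (Finset.mem_range.mp hj))).symm
    rw [h1, ← Finset.sum_add_distrib]
    refine Finset.sum_congr rfl fun j _ => ?_
    by_cases h : m ≤ j <;> simp [h]
  have hcard : 2 * Fintype.card σ + m * (m + 1) = n * (n + 1) := by
    rw [hσcard, Fin.sum_univ_eq_sum_range (fun j => if m ≤ j then j + 1 else 0)]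
    calc 2 * (∑ j ∈ Finset.range n, (if m ≤ j then j + 1 else 0)) + m * (m + 1)
        = 2 * (∑ j ∈ Finset.range n, (if m ≤ j then j + 1 else 0))
            + 2 * (∑ j ∈ Finset.range m, (j + 1)) := by rw [gauss m]
      _ = 2 * (∑ j ∈ Finset.range n, (j + 1)) := by rw [← Nat.mul_add, hsplit]
      _ = n * (n + 1) := gauss n
  have key : 2 * Module.finrank ℂ ↥L + m * (m + 1) ≤ n * (n + 1) :=
    calc 2 * Module.finrank ℂ ↥L + m * (m + 1)
        ≤ 2 * Fintype.card σ + m * (m + 1) :=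
          Nat.add_le_add_right (Nat.mul_le_mul_left 2 hD) _
      _ = n * (n + 1) := hcard
  exact base_locus_arith g n m (Module.finrank ℂ ↥L) hg hn hL key
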